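/- Let f : ℕ → ℕ be monotonically increasing and suppose that its Grundy function satisfies G_f(y,z) = y ⊕ z for all y, z ∈ ℕ with y ≤ f(z). Let a = d·2^(i+1) + d_i·2^i + e − 1 where d, e, i ∈ ℕ, d_i ∈ {0,1}, e < 2^i and 0 < d_i·2^i + e. If c·2^(i+1) ≤ f(a) < c·2^(i+1) + 2^i for some c ∈ ℕ, then f(a+1) < c·2^(i+1) + 2^i. -/

import Mathlib

/-- The minimum excluded value of a set of natural numbers. -/
noncomputable def mex (S : Set ℕ) : ℕ := sInf {n | n ∉ S}

/-- The Grundy function of the chocolate bar game `CB(f,·,·)`: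
`G_f(y,z) = mex({G_f(v,z) : v < y} ∪ {G_f(min(y, f w), w) : w < z})`. -/
noncomputable def grundy (f : ℕ → ℕ) (y z : ℕ) : ℕ :=
  mex ({x | ∃ v, ∃ _ : v < y, x = grundy f v z} ∪
       {x | ∃ w, ∃ _ : w < z, x = grundy f (min y (f w)) w})
termination_by (z, y)

lemma grundy_def' (f : ℕ → ℕ) (y z : ℕ) :
    grundy f y z = mex ({x | ∃ v, ∃ _ : v < y, x = grundy f v z} ∪
       {x | ∃ w, ∃ _ : w < z, x = grundy f (min y (f w)) w}) := by
  rw [grundy]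

lemma optionsFinite (f : ℕ → ℕ) (y z : ℕ) :
    (({x | ∃ v, ∃ _ : v < y, x = grundy f v z} ∪
      {x | ∃ w, ∃ _ : w < z, x = grundy f (min y (f w)) w}) : Set ℕ).Finite := by
  apply Set.Finite.union
  · apply Set.Finite.subset ((Set.finite_Iio y).image (fun v => grundy f v z))
    rintro x ⟨v, hv, rfl⟩
    exact ⟨v, hv, rfl⟩
  · apply Set.Finite.subset ((Set.finite_Iio z).image (fun w => grundy f (min y (f w)) w))
    rintro x ⟨w, hw, rfl⟩
    exact ⟨w, hw, rfl⟩

lemma mex_not_mem {S : Set ℕ} (hS : S.Finite) : mex S ∉ S := by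
  have h : ({n | n ∉ S} : Set ℕ).Nonempty := by
    simpa [Set.compl_def] using hS.infinite_compl.nonempty
  exact Nat.sInf_mem h

lemma mem_of_lt_mex {S : Set ℕ} {u : ℕ} (h : u < mex S) : u ∈ S := by
  by_contra hu
  exact absurd (Nat.sInf_le (show u ∈ {n | n ∉ S} from hu)) (by unfold mex at h; omega)

/-- Engine: a position `(y, z)` whose option `(f w, w)` has the same nim-value is absurd. -/
lemma engine (f : ℕ → ℕ) (hG : ∀ y z : ℕ, y ≤ f z → grundy f y z = y ^^^ z)
    {y z w : ℕ} (hw : w < z) (hyz : y ≤ f z) (hfw : f w ≤ y)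
    (hx : f w ^^^ w = y ^^^ z) : False := by
  have hg := hG y z hyz
  rw [grundy_def'] at hg
  have hmem : (y ^^^ z) ∈ (({x | ∃ v, ∃ _ : v < y, x = grundy f v z} ∪
      {x | ∃ w, ∃ _ : w < z, x = grundy f (min y (f w)) w}) : Set ℕ) := by
    right
    exact ⟨w, hw, by rw [min_eq_right hfw, hG (f w) w le_rfl, hx]⟩
  have hnm := mex_not_mem (optionsFinite f y z)
  rw [hg] at hnm
  exact hnm hmem

/-- Surjectivity of the Grundy function below the value at `(f z, z)`. -/
lemma surj (f : ℕ → ℕ) (hmono : Monotone f)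
    (hG : ∀ y z : ℕ, y ≤ f z → grundy f y z = y ^^^ z)
    {z u : ℕ} (h1 : u < f z ^^^ z) (h2 : f z < u ^^^ z) :
    ∃ w, w < z ∧ f w ^^^ w = u := by
  have hg := hG (f z) z le_rfl
  rw [grundy_def'] at hg
  have hu : u ∈ (({x | ∃ v, ∃ _ : v < f z, x = grundy f v z} ∪
      {x | ∃ w, ∃ _ : w < z, x = grundy f (min (f z) (f w)) w}) : Set ℕ) :=
    mem_of_lt_mex (by rw [hg]; exact h1)
  rcases hu with ⟨v, hv, rfl⟩ | ⟨w, hw, huw⟩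
  · rw [hG v z hv.le, Nat.xor_xor_cancel_right] at h2
    omega
  · refine ⟨w, hw, ?_⟩
    rw [min_eq_right (hmono hw.le)] at huw
    rw [huw, hG (f w) w le_rfl]

/-- XOR of block-decomposed numbers. -/
lemma xor_mul_add {k : ℕ} (x y u v : ℕ) (hu : u < 2 ^ k) (hv : v < 2 ^ k) :
    (x * 2 ^ k + u) ^^^ (y * 2 ^ k + v) = (x ^^^ y) * 2 ^ k + (u ^^^ v) := by
  have huv : u ^^^ v < 2 ^ k := Nat.xor_lt_two_pow hu hv
  apply Nat.eq_of_testBit_eq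
  intro j
  rw [Nat.mul_comm x, Nat.mul_comm y, Nat.mul_comm (x ^^^ y), Nat.testBit_xor,
    Nat.testBit_two_pow_mul_add _ hu, Nat.testBit_two_pow_mul_add _ hv,
    Nat.testBit_two_pow_mul_add _ huv]
  by_cases hj : j < k <;> simp [hj]

lemma inner_cancel {i w : ℕ} (hw : w < 2 ^ i) : 2 ^ i ^^^ (2 ^ i + w) = w := by
  have h := xor_mul_add (k := i) 1 1 0 w (Nat.two_pow_pos i) hw
  simpa using h

lemma inner_add {i r E : ℕ} (hr : r < 2 ^ i) (hE : E < 2 ^ i) :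
    r ^^^ (2 ^ i + E) = 2 ^ i + (r ^^^ E) := by
  have h := xor_mul_add (k := i) 0 1 r E hr hE
  simpa using h

theorem stmt_11 (f : ℕ → ℕ) (hmono : Monotone f)
    (hG : ∀ y z : ℕ, y ≤ f z → grundy f y z = y ^^^ z)
    (d e i di c a : ℕ) (hdi : di = 0 ∨ di = 1) (he : e < 2 ^ i)
    (hpos : 0 < di * 2 ^ i + e)
    (ha : a = d * 2 ^ (i + 1) + di * 2 ^ i + e - 1)
    (h1 : c * 2 ^ (i + 1) ≤ f a) (h2 : f a < c * 2 ^ (i + 1) + 2 ^ i) :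
    f (a + 1) < c * 2 ^ (i + 1) + 2 ^ i := by
  by_contra hF
  push_neg at hF
  have hP : 0 < 2 ^ i := Nat.two_pow_pos i
  have hKsplit : 2 ^ (i + 1) = 2 ^ i + 2 ^ i := by rw [pow_succ]; omega
  obtain ⟨r, hfa, hr⟩ : ∃ r, f a = c * 2 ^ (i + 1) + r ∧ r < 2 ^ i :=
    ⟨f a - c * 2 ^ (i + 1), by omega, by omega⟩
  rcases hdi with rfl | rfl
  · -- di = 0, so e ≥ 1
    obtain ⟨E, rfl⟩ : ∃ E, e = E + 1 := ⟨e - 1, by omega⟩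
    have ha' : a = d * 2 ^ (i + 1) + E := by omega
    have hE : E < 2 ^ i := by omega
    have hEr : E ^^^ r < 2 ^ i := Nat.xor_lt_two_pow hE hr
    set z := d * 2 ^ (i + 1) + (2 ^ i + (E ^^^ r)) with hz
    have haz : a < z := by omega
    have hfz : c * 2 ^ (i + 1) + 2 ^ i ≤ f z := le_trans hF (hmono (by omega : a + 1 ≤ z))
    refine engine f hG haz hfz (le_of_lt h2) ?_
    rw [hfa, ha', hz,
      xor_mul_add c d r E (by omega) (by omega),
      xor_mul_add c d (2 ^ i) (2 ^ i + (E ^^^ r)) (by omega) (by omega),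
      inner_cancel hEr, Nat.xor_comm r E]
  · -- di = 1
    have hA : a + 1 = d * 2 ^ (i + 1) + (2 ^ i + e) := by omega
    rcases Nat.eq_zero_or_pos e with rfl | he1
    · -- e = 0
      obtain ⟨Q, hQ⟩ : ∃ Q, 2 ^ i = Q + 1 := ⟨2 ^ i - 1, by omega⟩
      have ha' : a = d * 2 ^ (i + 1) + Q := by omega
      by_cases hrQ : r = Q
      · refine engine f hG (show a < a + 1 by omega) hF (le_of_lt h2) ?_
        rw [hfa, hA, ha', hrQ,
          xor_mul_add c d Q Q (by omega) (by omega),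
          xor_mul_add c d (2 ^ i) (2 ^ i + 0) (by omega) (by omega),
          Nat.xor_self, inner_cancel hP]
      · have h1' : (c ^^^ d) * 2 ^ (i + 1) < f a ^^^ a := by
          rw [hfa, ha', xor_mul_add c d r Q (by omega) (by omega)]
          have hne : r ^^^ Q ≠ 0 := fun h => hrQ (Nat.eq_of_xor_eq_zero h)
          omega
        have h2' : f a < (c ^^^ d) * 2 ^ (i + 1) ^^^ a := by
          have hcalc : (c ^^^ d) * 2 ^ (i + 1) ^^^ a = c * 2 ^ (i + 1) + Q := by
            rw [ha']
            have h := xor_mul_add (k := i + 1) (c ^^^ d) d 0 Q (by omega) (by omega)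
            simpa [Nat.xor_xor_cancel_right] using h
          rw [hcalc, hfa]
          omega
        obtain ⟨w, hw, hww⟩ := surj f hmono hG h1' h2'
        refine engine f hG (show w < a + 1 by omega) hF
          (le_trans (hmono hw.le) (le_of_lt h2)) ?_
        rw [hww, hA,
          xor_mul_add c d (2 ^ i) (2 ^ i + 0) (by omega) (by omega),
          inner_cancel hP]
        omega
    · -- e ≥ 1
      obtain ⟨E, rfl⟩ : ∃ E, e = E + 1 := ⟨e - 1, by omega⟩
      have ha' : a = d * 2 ^ (i + 1) + (2 ^ i + E) := by omega
      have hE : E < 2 ^ i := by omega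
      have hg : f a ^^^ a = (c ^^^ d) * 2 ^ (i + 1) + (2 ^ i + (r ^^^ E)) := by
        rw [hfa, ha', xor_mul_add c d r (2 ^ i + E) (by omega) (by omega), inner_add hr hE]
      have h1' : (c ^^^ d) * 2 ^ (i + 1) + (E + 1) < f a ^^^ a := by
        rw [hg]; omega
      have h2' : f a < ((c ^^^ d) * 2 ^ (i + 1) + (E + 1)) ^^^ a := by
        have hcalc : ((c ^^^ d) * 2 ^ (i + 1) + (E + 1)) ^^^ a
            = c * 2 ^ (i + 1) + (2 ^ i + ((E + 1) ^^^ E)) := by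
          rw [ha', xor_mul_add (c ^^^ d) d (E + 1) (2 ^ i + E) (by omega) (by omega),
            inner_add he hE, Nat.xor_xor_cancel_right]
        rw [hcalc, hfa]
        omega
      obtain ⟨w, hw, hww⟩ := surj f hmono hG h1' h2'
      refine engine f hG (show w < a + 1 by omega) hF
        (le_trans (hmono hw.le) (le_of_lt h2)) ?_
      rw [hww, hA,
        xor_mul_add c d (2 ^ i) (2 ^ i + (E + 1)) (by omega) (by omega),
        inner_cancel he]
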